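/- (Corollary: necessary and sufficient condition for exact identification.) Let ℓ : Fin K → (Fin K → Fin M) → ℝ be a counterfactual loss. The following are equivalent: (i) there exists a function f such that for every probability mass function p on (Fin K) × (Fin K → Fin M), R(p; ℓ) = f(Φ(p)); (ii) there exist weights ω : Fin K → Fin K → Fin M → ℝ with ℓ d y = Σ over k of ω k d (y k) for all d, y. Moreover, when (ii) holds, R(p; ℓ) = Σ over d, k ∈ Fin K and m ∈ Fin M of ω k d m · Φ(p)(d, k, m) for every pmf p. -/

import Mathlib

/-- The counterfactual risk `R(p; ℓ) = Σ_{(d,y)} ℓ d y · p(d,y)` for a pmf `p` on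
`(Fin K) × (Fin K → Fin M)` (joint law of the evaluated decision and the potential outcomes). -/
def cfRisk (K M : ℕ) (p : Fin K × (Fin K → Fin M) → ℝ)
    (ℓ : Fin K → (Fin K → Fin M) → ℝ) : ℝ :=
  ∑ d : Fin K, ∑ y : Fin K → Fin M, ℓ d y * p (d, y)

/-- The marginal map `Φ`: `Φ(p)(d, k, m) = Σ_{y : y k = m} p(d, y)`. -/
def Phi (K M : ℕ) (p : Fin K × (Fin K → Fin M) → ℝ) : Fin K × Fin K × Fin M → ℝ :=
  fun q => ∑ y ∈ Finset.univ.filter (fun y : Fin K → Fin M => y q.2.1 = q.2.2), p (q.1, y)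

lemma ind_filter_sum {K M : ℕ} (k : Fin K) (m : Fin M) (w : Fin K → Fin M) (c : ℝ) :
    ∑ y ∈ Finset.univ.filter (fun y : Fin K → Fin M => y k = m), (if y = w then c else 0)
    = if w k = m then c else 0 := by
  rw [Finset.sum_ite_eq' (Finset.univ.filter _) w (fun _ => c)]
  simp

lemma sum_mul_ind {α : Type*} [Fintype α] [DecidableEq α] (g : α → ℝ) (w : α) (c : ℝ) :
    ∑ x : α, g x * (if x = w then c else 0) = g w * c := by
  simp [mul_ite]

/-- The "moreover" computation for additive losses. -/
lemma risk_additive (K M : ℕ) (ω : Fin K → Fin K → Fin M → ℝ)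
    (p : Fin K × (Fin K → Fin M) → ℝ) :
    (∑ d : Fin K, ∑ y : Fin K → Fin M, (∑ k : Fin K, ω k d (y k)) * p (d, y))
    = ∑ d : Fin K, ∑ k : Fin K, ∑ m : Fin M, ω k d m * Phi K M p (d, k, m) := by
  refine Finset.sum_congr rfl fun d _ => ?_
  simp_rw [Finset.sum_mul]
  rw [Finset.sum_comm]
  refine Finset.sum_congr rfl fun k _ => ?_
  rw [← Finset.sum_fiberwise Finset.univ (fun y : Fin K → Fin M => y k)
      (fun y => ω k d (y k) * p (d, y))]
  unfold Phi
  simp_rw [Finset.mul_sum]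
  refine Finset.sum_congr rfl fun m _ => Finset.sum_congr rfl fun y hy => ?_
  simp only [Finset.mem_filter] at hy
  rw [hy.2]

/-- Corollary: necessary and sufficient condition for exact identification:
the counterfactual risk `R(·; ℓ)` is a function of the marginals `Φ(p)` over all pmfs `p`
if and only if `ℓ` is additive with no intercept term; moreover, in that case
`R(p; ℓ) = Σ_{d,k,m} ω k d m · Φ(p)(d, k, m)` for every pmf `p`. -/
theorem stmt_4 (K M : ℕ) (hK : 2 ≤ K) (hM : 2 ≤ M)
    (ℓ : Fin K → (Fin K → Fin M) → ℝ) :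
    ((∃ f : (Fin K × Fin K × Fin M → ℝ) → ℝ,
      ∀ p : Fin K × (Fin K → Fin M) → ℝ,
        (∀ z, 0 ≤ p z) → (∑ z, p z = 1) →
        cfRisk K M p ℓ = f (Phi K M p)) ↔
    (∃ ω : Fin K → Fin K → Fin M → ℝ,
      ∀ (d : Fin K) (y : Fin K → Fin M), ℓ d y = ∑ k : Fin K, ω k d (y k))) ∧
    (∀ ω : Fin K → Fin K → Fin M → ℝ,
      (∀ (d : Fin K) (y : Fin K → Fin M), ℓ d y = ∑ k : Fin K, ω k d (y k)) →
      ∀ p : Fin K × (Fin K → Fin M) → ℝ,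
        (∀ z, 0 ≤ p z) → (∑ z, p z = 1) →
        cfRisk K M p ℓ =
          ∑ d : Fin K, ∑ k : Fin K, ∑ m : Fin M, ω k d m * Phi K M p (d, k, m)) := by
  haveI : NeZero M := ⟨by omega⟩
  have hKR : (2:ℝ) ≤ (K:ℝ) := by exact_mod_cast hK
  have hK0 : (K : ℝ) ≠ 0 := by linarith
  set a : ℝ := 1 / (K:ℝ) with ha_def
  set b : ℝ := ((K:ℝ) - 1) / (K:ℝ) with hb_def
  have ha : 0 ≤ a := by positivity
  have hb : 0 ≤ b := by
    apply div_nonneg <;> linarith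
  have hab : a + b = 1 := by rw [ha_def, hb_def]; field_simp; ring
  have hba : b = ((K:ℝ) - 1) * a := by rw [ha_def, hb_def]; ring
  set c0 : Fin K → Fin M := fun _ => 0 with hc0
  constructor
  · constructor
    · -- hard direction
      rintro ⟨f, hf⟩
      refine ⟨fun k d m => ℓ d (Function.update c0 k m) - b * ℓ d c0, fun d y => ?_⟩
      -- the two pmfs
      set p1 : Fin K × (Fin K → Fin M) → ℝ := fun z =>
        if z.1 = d then a * (if z.2 = y then 1 else 0)
          + b * (if z.2 = c0 then 1 else 0) else 0 with hp1
      set p2 : Fin K × (Fin K → Fin M) → ℝ := fun z =>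
        if z.1 = d then ∑ j : Fin K,
          (if z.2 = Function.update c0 j (y j) then a else 0) else 0 with hp2
      have h1nn : ∀ z, 0 ≤ p1 z := by
        intro z
        rw [hp1]
        dsimp only
        split_ifs <;> nlinarith [ha, hb]
      have h2nn : ∀ z, 0 ≤ p2 z := by
        intro z
        rw [hp2]
        dsimp only
        split_ifs with h
        · exact Finset.sum_nonneg fun j _ => by split_ifs <;> simp [ha]
        · exact le_refl 0
      have h1sum : ∑ z, p1 z = 1 := by
        rw [Fintype.sum_prod_type]
        rw [Finset.sum_eq_single d]
        · rw [hp1]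
          dsimp only
          simp only [eq_self_iff_true, if_true]
          rw [Finset.sum_add_distrib, ← Finset.mul_sum, ← Finset.mul_sum]
          simp [Finset.sum_ite_eq', hab]
        · intro d' _ hd'
          rw [hp1]; simp [hd']
        · simp
      have h2sum : ∑ z, p2 z = 1 := by
        rw [Fintype.sum_prod_type]
        rw [Finset.sum_eq_single d]
        · rw [hp2]
          dsimp only
          simp only [eq_self_iff_true, if_true]
          rw [Finset.sum_comm]
          have : ∀ j : Fin K, ∑ y' : Fin K → Fin M,
              (if y' = Function.update c0 j (y j) then a else 0) = a := by
            intro j; simp [Finset.sum_ite_eq']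
          simp only [this, Finset.sum_const, Finset.card_univ, Fintype.card_fin,
            nsmul_eq_mul]
          rw [ha_def]; field_simp
        · intro d' _ hd'
          rw [hp2]; simp [hd']
        · simp
      have hPhi : Phi K M p1 = Phi K M p2 := by
        funext q
        obtain ⟨d', k, m⟩ := q
        unfold Phi
        dsimp only
        by_cases hd : d' = d
        · subst hd
          rw [hp1, hp2]
          dsimp only
          simp only [eq_self_iff_true, if_true]
          rw [Finset.sum_add_distrib]
          simp only [mul_ite, mul_one, mul_zero]
          rw [ind_filter_sum, ind_filter_sum, Finset.sum_comm]
          simp only [ind_filter_sum]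
          have hupd : ∀ j : Fin K, Function.update c0 j (y j) k
              = if k = j then y j else 0 := by
            intro j; rw [Function.update_apply]
          simp only [hupd]
          rw [Finset.sum_eq_sum_sdiff_singleton_add (Finset.mem_univ k)]
          have : ∀ j ∈ Finset.univ \ {k},
              (if (if k = j then y j else (0:Fin M)) = m then a else 0)
              = (if (0:Fin M) = m then a else 0) := by
            intro j hj
            simp only [Finset.mem_sdiff, Finset.mem_singleton] at hj
            rw [if_neg (show ¬ k = j from fun h => hj.2 h.symm)]
          rw [Finset.sum_congr rfl this, Finset.sum_const]
          simp only [eq_self_iff_true, if_true]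
          have hcard : (Finset.univ \ {k} : Finset (Fin K)).card = K - 1 := by
            simp [Finset.card_sdiff_of_subset]
          rw [hcard, nsmul_eq_mul]
          have : ((K - 1 : ℕ) : ℝ) = (K:ℝ) - 1 := by
            have : 1 ≤ K := by omega
            push_cast [this]; ring
          rw [this]
          have hc0k : c0 k = (0 : Fin M) := rfl
          rw [hc0k, hba]
          by_cases h0 : (0:Fin M) = m <;> by_cases h1 : y k = m <;>
            simp [h0, h1] <;> ring
        · rw [hp1, hp2]
          simp [hd]
      have hr1 : cfRisk K M p1 ℓ = a * ℓ d y + b * ℓ d c0 := by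
        unfold cfRisk
        rw [Finset.sum_eq_single d]
        · rw [hp1]
          dsimp only
          simp only [eq_self_iff_true, if_true]
          simp only [mul_add, mul_ite, mul_one, mul_zero]
          rw [Finset.sum_add_distrib]
          simp [Finset.sum_ite_eq', mul_comm]
        · intro d' _ hd'
          rw [hp1]; simp [hd']
        · simp
      have hr2 : cfRisk K M p2 ℓ = a * ∑ j : Fin K, ℓ d (Function.update c0 j (y j)) := by
        unfold cfRisk
        rw [Finset.sum_eq_single d]
        · rw [hp2]
          dsimp only
          simp only [eq_self_iff_true, if_true]
          simp only [Finset.mul_sum, mul_ite, mul_zero]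
          rw [Finset.sum_comm]
          simp [Finset.sum_ite_eq', Finset.mul_sum, mul_comm]
        · intro d' _ hd'
          rw [hp2]; simp [hd']
        · simp
      have key : a * ℓ d y + b * ℓ d c0
          = a * ∑ j : Fin K, ℓ d (Function.update c0 j (y j)) := by
        rw [← hr1, ← hr2, hf p1 h1nn h1sum, hf p2 h2nn h2sum, hPhi]
      rw [Finset.sum_sub_distrib, Finset.sum_const, Finset.card_univ, Fintype.card_fin,
        nsmul_eq_mul]
      rw [ha_def, hb_def] at key
      rw [hb_def]
      field_simp at key ⊢
      linarith
    · -- easy direction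
      rintro ⟨ω, hω⟩
      refine ⟨fun q => ∑ d : Fin K, ∑ k : Fin K, ∑ m : Fin M, ω k d m * q (d, k, m),
        fun p _ _ => ?_⟩
      unfold cfRisk
      simp_rw [hω]
      exact risk_additive K M ω p
  · intro ω hω p _ _
    unfold cfRisk
    simp_rw [hω]
    exact risk_additive K M ω p
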